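/- Let Λ be a real vector space and S : (ℕ → Λ) → Λ an ℝ-linear map satisfying the unit and associativity axioms of an algebra over the coperad ℝ[X]. If a : ℕ → Λ is eventually zero, say a_n = 0 for all n ≥ N, then S(a) = ∑_{n < N} ε^n(a_n). -/
import Mathlib


/-- If `(Λ, S)` is an algebra over the coperad `ℝ[X]`
(`S` is ℝ-linear and satisfies the unit and associativity axioms),
`ε a = S (0, a, 0, 0, …)`, and `a : ℕ → Λ` vanishes from index `N` on,
then `S a = ∑_{n < N} ε^n (a n)`. -/
theorem S_eventually_zero_eq_sum_iterates
    (Λ : Type*) [AddCommGroup Λ] [Module ℝ Λ]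
    (S : (ℕ → Λ) →ₗ[ℝ] Λ)
    (hunit : ∀ a : Λ, S (fun n => if n = 0 then a else 0) = a)
    (hassoc : ∀ a : ℕ → ℕ → Λ,
      S (fun i => S (a i)) = S (fun n => ∑ p ∈ Finset.range (n + 1), a p (n - p)))
    (ε : Λ → Λ) (hε : ∀ x : Λ, ε x = S (fun n => if n = 1 then x else 0))
    (a : ℕ → Λ) (N : ℕ) (ha : ∀ n : ℕ, N ≤ n → a n = 0) :
    S a = ∑ n ∈ Finset.range N, ε^[n] (a n) := by
  -- Key lemma: S of a "single" sequence is an iterate of ε.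
  have key : ∀ (n : ℕ) (x : Λ), S (fun m => if m = n then x else 0) = ε^[n] x := by
    intro n
    induction n with
    | zero => intro x; simpa using hunit x
    | succ n ih =>
      intro x
      have h := hassoc (fun i j => if i = 1 then (if j = n then x else 0) else 0)
      have hL : (fun i => S (fun j => if i = 1 then (if j = n then x else 0) else 0))
          = fun i => if i = 1 then S (fun j => if j = n then x else 0) else 0 := by
        funext i
        by_cases hi : i = 1
        · simp [hi]
        · simp only [hi, if_false]
          have : (fun _ : ℕ => (0 : Λ)) = (0 : ℕ → Λ) := rfl
          rw [this, map_zero]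
      have hR : (fun m => ∑ p ∈ Finset.range (m + 1),
            if p = 1 then (if m - p = n then x else 0) else 0)
          = fun m => if m = n + 1 then x else 0 := by
        funext m
        rw [Finset.sum_ite_eq' (Finset.range (m + 1)) 1
          (fun p => if m - p = n then x else 0)]
        rcases m with _ | m
        · simp
        · simp only [Finset.mem_range]
          have h1 : 1 < m + 1 + 1 := by omega
          rw [if_pos h1]
          have : m + 1 - 1 = m := by omega
          rw [this]
          by_cases hm : m = n
          · simp [hm]
          · have : m + 1 ≠ n + 1 := by omega
            simp [hm, this]
      rw [hL, hR] at h
      calc S (fun m => if m = n + 1 then x else 0)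
          = S (fun i => if i = 1 then S (fun j => if j = n then x else 0) else 0) := h.symm
        _ = ε (S (fun j => if j = n then x else 0)) := (hε _).symm
        _ = ε (ε^[n] x) := by rw [ih]
        _ = ε^[n + 1] x := (Function.iterate_succ_apply' ε n x).symm
  have ha' : a = ∑ n ∈ Finset.range N, (fun m => if m = n then a n else 0) := by
    funext m
    rw [Finset.sum_apply]
    by_cases hm : m < N
    · rw [Finset.sum_eq_single m]
      · simp
      · intro b _ hb; simp [Ne.symm hb]
      · intro hmem; exact absurd (Finset.mem_range.mpr hm) hmem
    · rw [ha m (le_of_not_gt hm)]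
      symm; apply Finset.sum_eq_zero
      intro b hb
      have : m ≠ b := by
        have := Finset.mem_range.mp hb; omega
      simp [this]
  conv_lhs => rw [ha', map_sum]
  exact Finset.sum_congr rfl fun n _ => key n (a n)
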